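/- With the setup of the usefulness metric f(u; N) = ∑_{m=u+1}^{M} C(N,m)p1^m(1−p1)^{N−m} + ∑_{m=1}^{u} C(N,m)p1^m(1−p1)^{N−m} ∑_{l=0}^{m−1} C(u,l)(1−p2)^l p2^{u−l} (extended by zero for m > N), for fixed u ≥ 0 and 0 < p1 < 1, 0 < p2 < 1, the value f(u; N) is strictly increasing in N for 0 ≤ N ≤ M: if N < N' ≤ M then f(u; N) < f(u; N'). -/
import Mathlib

noncomputable def batchP (N : ℕ) (p1 : ℝ) (m : ℕ) : ℝ :=
  (N.choose m : ℝ) * p1 ^ m * (1 - p1) ^ (N - m)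

noncomputable def usefulness (M N : ℕ) (p1 p2 : ℝ) (u : ℕ) : ℝ :=
  (∑ m ∈ Finset.Icc (u + 1) M, batchP N p1 m) +
    ∑ m ∈ Finset.Icc 1 u, batchP N p1 m *
      ∑ l ∈ Finset.range m, (u.choose l : ℝ) * (1 - p2) ^ l * p2 ^ (u - l)

noncomputable def gsum (u : ℕ) (p2 : ℝ) (m : ℕ) : ℝ :=
  ∑ l ∈ Finset.range m, (u.choose l : ℝ) * (1 - p2) ^ l * p2 ^ (u - l)

noncomputable def wfun (u : ℕ) (p2 : ℝ) (m : ℕ) : ℝ :=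
  if m = 0 then 0 else if m ≤ u then gsum u p2 m else 1

variable {u M N : ℕ} {p1 p2 : ℝ}

lemma gterm_nonneg (hp2 : 0 < p2) (hp2' : p2 < 1) (u l : ℕ) :
    0 ≤ (u.choose l : ℝ) * (1 - p2) ^ l * p2 ^ (u - l) := by
  have h1 : (0:ℝ) ≤ 1 - p2 := by linarith
  exact mul_nonneg (mul_nonneg (by positivity) (pow_nonneg h1 l)) (pow_nonneg hp2.le _)

lemma gsum_nonneg (hp2 : 0 < p2) (hp2' : p2 < 1) (m : ℕ) : 0 ≤ gsum u p2 m :=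
  Finset.sum_nonneg fun l _ => gterm_nonneg hp2 hp2' u l

lemma gsum_le_one (hp2 : 0 < p2) (hp2' : p2 < 1) {m : ℕ} (hm : m ≤ u + 1) :
    gsum u p2 m ≤ 1 := by
  have h1 : gsum u p2 m ≤ gsum u p2 (u + 1) := by
    apply Finset.sum_le_sum_of_subset_of_nonneg
    · exact Finset.range_subset_range.mpr hm
    · intro l _ _; exact gterm_nonneg hp2 hp2' u l
  have h2 : gsum u p2 (u + 1) = 1 := by
    have h3 := add_pow (1 - p2) p2 u
    rw [sub_add_cancel, one_pow] at h3
    calc gsum u p2 (u + 1)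
        = ∑ l ∈ Finset.range (u + 1), (1 - p2) ^ l * p2 ^ (u - l) * (u.choose l : ℝ) :=
          Finset.sum_congr rfl (fun l _ => by ring)
      _ = 1 := h3.symm
  linarith

lemma wfun_nonneg (hp2 : 0 < p2) (hp2' : p2 < 1) (m : ℕ) : 0 ≤ wfun u p2 m := by
  unfold wfun
  split
  · exact le_rfl
  · split
    · exact gsum_nonneg hp2 hp2' m
    · norm_num

lemma wfun_mono (hp2 : 0 < p2) (hp2' : p2 < 1) (m : ℕ) :
    wfun u p2 m ≤ wfun u p2 (m + 1) := by
  rcases Nat.eq_zero_or_pos m with hm | hm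
  · subst hm
    rw [show wfun u p2 0 = 0 from by simp [wfun]]
    exact wfun_nonneg hp2 hp2' 1
  · unfold wfun
    rw [if_neg (show m ≠ 0 by omega), if_neg (show m + 1 ≠ 0 by omega)]
    by_cases h1 : m + 1 ≤ u
    · rw [if_pos (show m ≤ u by omega), if_pos h1]
      unfold gsum
      rw [Finset.sum_range_succ]
      have := gterm_nonneg hp2 hp2' u m
      linarith
    · rw [if_neg h1]
      by_cases h2 : m ≤ u
      · rw [if_pos h2]
        exact gsum_le_one hp2 hp2' (by omega)
      · rw [if_neg h2]

lemma wfun_one_pos (hp2 : 0 < p2) (hp2' : p2 < 1) : 0 < wfun u p2 1 := by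
  unfold wfun
  rw [if_neg (by omega)]
  split
  · rw [gsum]
    simp only [Finset.range_one, Finset.sum_singleton, Nat.choose_zero_right, pow_zero]
    have : 0 < p2 ^ (u - 0) := pow_pos hp2 _
    simpa using this
  · norm_num

lemma batchP_nonneg (hp1 : 0 < p1) (hp1' : p1 < 1) (N m : ℕ) : 0 ≤ batchP N p1 m := by
  unfold batchP
  have : (0:ℝ) ≤ 1 - p1 := by linarith
  positivity

lemma batchP_of_lt {m : ℕ} (h : N < m) : batchP N p1 m = 0 := by
  unfold batchP
  rw [Nat.choose_eq_zero_of_lt h]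
  simp

lemma batchP_zero_pos (hp1 : 0 < p1) (hp1' : p1 < 1) : 0 < batchP N p1 0 := by
  unfold batchP
  simp only [Nat.choose_zero_right, pow_zero, Nat.cast_one, one_mul, Nat.sub_zero, mul_one]
  have : (0:ℝ) < 1 - p1 := by linarith
  positivity

lemma batchP_rec (N m : ℕ) (p1 : ℝ) :
    batchP (N + 1) p1 (m + 1)
      = (1 - p1) * batchP N p1 (m + 1) + p1 * batchP N p1 m := by
  unfold batchP
  rw [Nat.choose_succ_succ]
  push_cast
  rcases le_or_gt (m + 1) N with h | h
  · rw [show N - m = N - (m + 1) + 1 from by omega]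
    ring
  · rw [Nat.choose_eq_zero_of_lt h]
    rcases le_or_gt m N with h2 | h2
    · have hm : m = N := by omega
      subst hm
      simp
      ring
    · rw [Nat.choose_eq_zero_of_lt h2]
      simp

lemma usefulness_repr (hNM : N ≤ M) (hp2 : 0 < p2) (hp2' : p2 < 1) :
    usefulness M N p1 p2 u
      = ∑ m ∈ Finset.range (M + 1), batchP N p1 m * wfun u p2 m := by
  have step1 : ∑ m ∈ Finset.range (M + 1), batchP N p1 m * wfun u p2 m
      = ∑ m ∈ Finset.Icc 1 M, batchP N p1 m * wfun u p2 m := by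
    symm
    apply Finset.sum_subset
    · intro x hx; simp only [Finset.mem_Icc] at hx; simp only [Finset.mem_range]; omega
    · intro x hx hx'
      simp only [Finset.mem_range] at hx
      simp only [Finset.mem_Icc] at hx'
      have : x = 0 := by omega
      subst this
      simp [wfun]
  rw [step1]
  rw [← Finset.sum_filter_add_sum_filter_not (Finset.Icc 1 M) (· ≤ u)]
  have hf1 : Finset.filter (· ≤ u) (Finset.Icc 1 M) = Finset.Icc 1 (min M u) := by
    ext x; simp only [Finset.mem_filter, Finset.mem_Icc, le_min_iff]; omega
  have hf2 : Finset.filter (fun m => ¬ m ≤ u) (Finset.Icc 1 M) = Finset.Icc (u + 1) M := by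
    ext x; simp only [Finset.mem_filter, Finset.mem_Icc]; omega
  rw [hf1, hf2]
  have e1 : ∑ m ∈ Finset.Icc (u+1) M, batchP N p1 m * wfun u p2 m
      = ∑ m ∈ Finset.Icc (u+1) M, batchP N p1 m := by
    apply Finset.sum_congr rfl
    intro m hm
    simp only [Finset.mem_Icc] at hm
    rw [wfun, if_neg (by omega), if_neg (by omega), mul_one]
  have e2 : ∑ m ∈ Finset.Icc 1 (min M u), batchP N p1 m * wfun u p2 m
      = ∑ m ∈ Finset.Icc 1 u, batchP N p1 m *
          ∑ l ∈ Finset.range m, (u.choose l : ℝ) * (1 - p2) ^ l * p2 ^ (u - l) := by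
    rw [show (∑ m ∈ Finset.Icc 1 u, batchP N p1 m *
          ∑ l ∈ Finset.range m, (u.choose l : ℝ) * (1 - p2) ^ l * p2 ^ (u - l))
        = ∑ m ∈ Finset.Icc 1 u, batchP N p1 m * gsum u p2 m from rfl]
    have hsub : Finset.Icc 1 (min M u) ⊆ Finset.Icc 1 u := by
      intro x; simp only [Finset.mem_Icc, le_min_iff]; omega
    rw [Finset.sum_subset hsub]
    · apply Finset.sum_congr rfl
      intro m hm
      simp only [Finset.mem_Icc] at hm
      rw [wfun, if_neg (by omega), if_pos (by omega)]
    · intro x hx hx'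
      simp only [Finset.mem_Icc, le_min_iff] at hx hx'
      have : N < x := by omega
      rw [batchP_of_lt this, zero_mul]
  rw [e1, e2, usefulness]
  ring

lemma usefulness_step (hNM : N < M) (hp1 : 0 < p1) (hp1' : p1 < 1)
    (hp2 : 0 < p2) (hp2' : p2 < 1) :
    usefulness M N p1 p2 u < usefulness M (N + 1) p1 p2 u := by
  rw [usefulness_repr (by omega) hp2 hp2', usefulness_repr (by omega) hp2 hp2']
  have hw0 : wfun u p2 0 = 0 := by simp [wfun]
  have hFN : ∑ m ∈ Finset.range (M + 1), batchP N p1 m * wfun u p2 m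
      = ∑ i ∈ Finset.range M, batchP N p1 (i + 1) * wfun u p2 (i + 1) := by
    rw [Finset.sum_range_succ']
    rw [hw0, mul_zero, add_zero]
  have hFN' : ∑ m ∈ Finset.range (M + 1), batchP N p1 m * wfun u p2 m
      = ∑ i ∈ Finset.range M, batchP N p1 i * wfun u p2 i := by
    rw [Finset.sum_range_succ, batchP_of_lt hNM, zero_mul, add_zero]
  have hexp : ∑ m ∈ Finset.range (M + 1), batchP (N + 1) p1 m * wfun u p2 m
      = (1 - p1) * (∑ m ∈ Finset.range (M + 1), batchP N p1 m * wfun u p2 m)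
        + p1 * ∑ i ∈ Finset.range M, batchP N p1 i * wfun u p2 (i + 1) := by
    rw [Finset.sum_range_succ' (fun m => batchP (N + 1) p1 m * wfun u p2 m)]
    rw [hw0, mul_zero, add_zero]
    have key : ∀ i, batchP (N + 1) p1 (i + 1) * wfun u p2 (i + 1)
        = (1 - p1) * (batchP N p1 (i + 1) * wfun u p2 (i + 1))
          + p1 * (batchP N p1 i * wfun u p2 (i + 1)) := by
      intro i
      rw [batchP_rec]
      ring
    rw [Finset.sum_congr rfl (fun i _ => key i), Finset.sum_add_distrib,
      ← Finset.mul_sum, ← Finset.mul_sum, hFN]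
  rw [hexp]
  have hA : ∑ i ∈ Finset.range M, batchP N p1 i * wfun u p2 i
      < ∑ i ∈ Finset.range M, batchP N p1 i * wfun u p2 (i + 1) := by
    apply Finset.sum_lt_sum
    · intro i _
      exact mul_le_mul_of_nonneg_left (wfun_mono hp2 hp2' i) (batchP_nonneg hp1 hp1' N i)
    · refine ⟨0, Finset.mem_range.mpr (by omega), ?_⟩
      rw [hw0, mul_zero]
      exact mul_pos (batchP_zero_pos hp1 hp1') (wfun_one_pos hp2 hp2')
  rw [hFN']
  nlinarith [mul_lt_mul_of_pos_left hA hp1]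

/-- The usefulness metric is strictly increasing in the number N of packets received
for the batch in phase 1: if N < N' ≤ M then f(u; N) < f(u; N'). -/
theorem usefulness_strictMono_in_received (M N N' u : ℕ) (p1 p2 : ℝ)
    (hp1 : 0 < p1) (hp1' : p1 < 1) (hp2 : 0 < p2) (hp2' : p2 < 1)
    (hNN' : N < N') (hN'M : N' ≤ M) :
    usefulness M N p1 p2 u < usefulness M N' p1 p2 u := by
  induction N' with
  | zero => omega
  | succ n ih =>
    rcases Nat.lt_or_ge N n with h | h
    · exact (ih h (by omega)).trans (usefulness_step (by omega) hp1 hp1' hp2 hp2')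
    · have : N = n := by omega
      subst this
      exact usefulness_step (by omega) hp1 hp1' hp2 hp2'
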